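/- arXiv:2106.08560 — 2 statements merged into one kernel-verified Lean document; each statement's English description precedes it below -/
import Mathlib

section
/- Let k be a field of characteristic different from 2, let ε, c ∈ k^×, and consider the quadratic form q(y₀,y₁,y₂,y₃) = c·(y₀y₁ − y₂² + ε·y₃²) on k⁴, with associated bilinear form B_q(x,x') = c·(x₀x₁' + x₁x₀' − 2x₂x₂' + 2ε·x₃x₃'). Let x, x' ∈ k⁴ satisfy q(x) = q(x') = 0, x₀·x₀' ≠ 0, and B_q(x,x') ≠ 0. Then the quaternion algebras ℍ[k; ε, −B_q(x,x')/(x₀x₀')] and ℍ[k; ε, −c] are isomorphic as k-algebras; indeed, −B_q(x,x')/(x₀x₀') = −c·((x₂/x₀ − x₂'/x₀')² − ε·(x₃/x₀ − x₃'/x₀')²), so the two second slots differ by a value of the norm form u² − ε·v². -/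
open scoped Quaternion

namespace QuatAux

variable {k : Type} [Field k]

/-- A quaternionic basis for `ℍ[k,a,b]` realizing the parameters `(a, b*(u^2-a*v^2))`. -/
def basis1 (a b u v : k) : QuaternionAlgebra.Basis ℍ[k,a,b] a 0 (b * (u ^ 2 - a * v ^ 2)) where
  i := ⟨0, 1, 0, 0⟩
  j := ⟨0, 0, u, v⟩
  k := ⟨0, 0, a * v, u⟩
  i_mul_i := by ext <;> simp
  j_mul_j := by ext <;> simp <;> ring
  i_mul_j := by ext <;> simp
  j_mul_i := by ext <;> simp <;> ring

/-- A quaternionic basis for `ℍ[k,a,b*(u^2-a*v^2)]` realizing the parameters `(a, b)`. -/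
def basis2 (a b u v : k) (h : u ^ 2 - a * v ^ 2 ≠ 0) :
    QuaternionAlgebra.Basis ℍ[k, a, b * (u ^ 2 - a * v ^ 2)] a 0 b where
  i := ⟨0, 1, 0, 0⟩
  j := ⟨0, 0, u / (u ^ 2 - a * v ^ 2), -(v / (u ^ 2 - a * v ^ 2))⟩
  k := ⟨0, 0, a * -(v / (u ^ 2 - a * v ^ 2)), u / (u ^ 2 - a * v ^ 2)⟩
  i_mul_i := by ext <;> simp
  j_mul_j := by ext <;> simp <;> field_simp <;> ring
  i_mul_j := by ext <;> simp
  j_mul_i := by ext <;> simp <;> ring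

/-- Twisting the second parameter of a quaternion algebra by a nonzero value of the norm
form `u² - a v²` gives an isomorphic algebra. -/
theorem quat_norm_equiv (a b u v : k) (h : u ^ 2 - a * v ^ 2 ≠ 0) :
    Nonempty (ℍ[k, a, b * (u ^ 2 - a * v ^ 2)] ≃ₐ[k] ℍ[k, a, b]) := by
  refine ⟨AlgEquiv.ofAlgHom (basis1 a b u v).liftHom (basis2 a b u v h).liftHom ?_ ?_⟩ <;>
  · ext <;>
      simp [QuaternionAlgebra.Basis.lift, basis1, basis2, QuaternionAlgebra.Basis.self] <;>
      field_simp <;> ring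

end QuatAux

/-- For the quadratic form `q(y) = c·(y₀y₁ − y₂² + ε·y₃²)` and isotropic vectors `x, x'` with
`x₀·x₀' ≠ 0` and `B_q(x,x') ≠ 0`, the quaternion algebra `(ε, −B_q(x,x')/(x₀x₀'))` is
isomorphic to `(ε, −c)`; indeed the two second slots differ by a value of the norm form
`u² − ε·v²`. -/
theorem quaternionAlgebra_of_isotropic_vectors
    (k : Type) [Field k] (hchar : ringChar k ≠ 2)
    (ε c : k) (hε : ε ≠ 0) (hc : c ≠ 0)
    (x x' : Fin 4 → k)
    (hqx : c * (x 0 * x 1 - x 2 ^ 2 + ε * x 3 ^ 2) = 0)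
    (hqx' : c * (x' 0 * x' 1 - x' 2 ^ 2 + ε * x' 3 ^ 2) = 0)
    (hx0 : x 0 * x' 0 ≠ 0)
    (B : k)
    (hB : B = c * (x 0 * x' 1 + x 1 * x' 0 - 2 * (x 2 * x' 2) + 2 * ε * (x 3 * x' 3)))
    (hB0 : B ≠ 0) :
    (-B / (x 0 * x' 0) =
      -c * ((x 2 / x 0 - x' 2 / x' 0) ^ 2 - ε * (x 3 / x 0 - x' 3 / x' 0) ^ 2)) ∧
    Nonempty (ℍ[k, ε, -B / (x 0 * x' 0)] ≃ₐ[k] ℍ[k, ε, -c]) := by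
  have hx0' : x 0 ≠ 0 := fun h => hx0 (by simp [h])
  have hx0'' : x' 0 ≠ 0 := fun h => hx0 (by simp [h])
  have h1 : x 0 * x 1 - x 2 ^ 2 + ε * x 3 ^ 2 = 0 := by
    rcases mul_eq_zero.mp hqx with h | h
    · exact absurd h hc
    · exact h
  have h2 : x' 0 * x' 1 - x' 2 ^ 2 + ε * x' 3 ^ 2 = 0 := by
    rcases mul_eq_zero.mp hqx' with h | h
    · exact absurd h hc
    · exact h
  have eq1 : -B / (x 0 * x' 0) =
      -c * ((x 2 / x 0 - x' 2 / x' 0) ^ 2 - ε * (x 3 / x 0 - x' 3 / x' 0) ^ 2) := by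
    subst hB
    rw [div_eq_iff hx0]
    field_simp
    linear_combination (-x' 0 ^ 2) * h1 + (-x 0 ^ 2) * h2
  refine ⟨eq1, ?_⟩
  have hne : (x 2 / x 0 - x' 2 / x' 0) ^ 2 - ε * (x 3 / x 0 - x' 3 / x' 0) ^ 2 ≠ 0 := by
    intro h
    apply hB0
    have : -B / (x 0 * x' 0) = 0 := by rw [eq1, h, mul_zero]
    have := (div_eq_zero_iff.mp this).resolve_right hx0
    exact neg_eq_zero.mp this
  rw [eq1]
  exact QuatAux.quat_norm_equiv ε (-c) _ _ hne
end

section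
/- Let k be a field of characteristic different from 2 and let q₁, q₂ ∈ k[x₀,…,x₄] define a smooth complete intersection of two quadrics X ⊂ ℙ⁴_k. Then the following are equivalent: (i) there exist (a,b) ∈ k² ∖ {(0,0)} and a 2-dimensional k-linear subspace W ⊆ k⁵ such that (a·q₁ + b·q₂)(w) = 0 for all w ∈ W (i.e., the variety 𝒢 parametrizing pairs consisting of a quadric in the pencil spanned by q₁, q₂ together with a line on it has a k-point); (ii) there exists a field extension K of k with [K:k] ≤ 2 such that X(K) ≠ ∅. -/
set_option maxHeartbeats 1000000
set_option synthInstance.maxHeartbeats 400000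


open MvPolynomial
/-- The Jacobian criterion: the homogeneous quadrics `q₁, q₂` define a smooth complete
intersection: at every nonzero common zero over an algebraic closure, the `2 × n` matrix of
partial derivatives has rank `2`. -/
def DefinesSmoothCI {k : Type} [Field k] {n : ℕ} (q₁ q₂ : MvPolynomial (Fin n) k) : Prop :=
  ∀ a : Fin n → AlgebraicClosure k, a ≠ 0 →
    eval a (map (algebraMap k (AlgebraicClosure k)) q₁) = 0 →
    eval a (map (algebraMap k (AlgebraicClosure k)) q₂) = 0 →
    (Matrix.of fun (i : Fin 2) (j : Fin n) =>
      eval a (pderiv j (map (algebraMap k (AlgebraicClosure k)) (![q₁, q₂] i)))).rank = 2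

/-- `X(K) ≠ ∅`: there is a nonzero solution of `q₁ = q₂ = 0` with coordinates in `K`. -/
def HasPointIn {k : Type} [Field k] {n : ℕ} (q₁ q₂ : MvPolynomial (Fin n) k)
    (K : Type) [Field K] [Algebra k K] : Prop :=
  ∃ x : Fin n → K, x ≠ 0 ∧ eval x (map (algebraMap k K) q₁) = 0 ∧
    eval x (map (algebraMap k K) q₂) = 0

namespace LPQ
variable {R : Type} [CommRing R] {n : ℕ}

noncomputable def epolar (q : MvPolynomial (Fin n) R) (u v : Fin n → R) : R :=
  eval (u + v) q - eval u q - eval v q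

theorem exists_single_add {d : Fin n →₀ ℕ} (hd : d.degree = 2) :
    ∃ i j : Fin n, d = Finsupp.single i 1 + Finsupp.single j 1 := by
  classical
  have hcard : Multiset.card (Finsupp.toMultiset d) = 2 := by
    rw [Finsupp.card_toMultiset]; exact hd
  obtain ⟨i, j, hij⟩ := Multiset.card_eq_two.1 hcard
  refine ⟨i, j, ?_⟩
  have h2 : Finsupp.toMultiset (Finsupp.single i 1 + Finsupp.single j 1) = ({i, j} : Multiset (Fin n)) := by
    rw [map_add, Finsupp.toMultiset_single, Finsupp.toMultiset_single, one_nsmul, one_nsmul]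
    rfl
  have := congrArg Multiset.toFinsupp (hij.trans h2.symm)
  rwa [Finsupp.toMultiset_toFinsupp, Finsupp.toMultiset_toFinsupp] at this

theorem eval_monomial_two (i j : Fin n) (c : R) (x : Fin n → R) :
    eval x (monomial (Finsupp.single i 1 + Finsupp.single j 1) c) = c * (x i * x j) := by
  classical
  rw [eval_monomial, Finsupp.prod_add_index' (fun a => pow_zero (x a)) (fun a b₁ b₂ => pow_add (x a) b₁ b₂)]
  simp [Finsupp.prod_single_index]

theorem master {q : MvPolynomial (Fin n) R} (hq : q.IsHomogeneous 2)
    (u v w : Fin n → R) (s t r : R) :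
    eval (fun j => s * u j + t * v j + r * w j) q
      = s^2 * eval u q + t^2 * eval v q + r^2 * eval w q
        + s*t * epolar q u v + s*r * epolar q u w + t*r * epolar q v w := by
  classical
  set P : MvPolynomial (Fin n) R → Prop := fun p =>
    eval (fun j => s * u j + t * v j + r * w j) p
      = s^2 * eval u p + t^2 * eval v p + r^2 * eval w p
        + s*t * epolar p u v + s*r * epolar p u w + t*r * epolar p v w with hP
  show P q
  have hadd : ∀ p₁ p₂, P p₁ → P p₂ → P (p₁ + p₂) := by
    intro p₁ p₂ h₁ h₂
    simp only [hP, epolar, map_add]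
    simp only [hP, epolar] at h₁ h₂
    linear_combination h₁ + h₂
  have h0 : P 0 := by simp [hP, epolar]
  have hmono : ∀ m ∈ q.support, P (monomial m (coeff m q)) := by
    intro m hm
    have hdeg : m.degree = 2 := by
      have := hq (mem_support_iff.mp hm)
      rw [Finsupp.degree_eq_weight_one]; exact this
    obtain ⟨i, j, rfl⟩ := exists_single_add hdeg
    simp only [hP, epolar, eval_monomial_two, Pi.add_apply]
    ring
  have := Finset.sum_induction (fun m => monomial m (coeff m q)) P hadd h0 hmono
  rwa [← as_sum q] at this

end LPQ

namespace LPQ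
variable {R : Type} [CommRing R] {n : ℕ}

theorem expand2 {q : MvPolynomial (Fin n) R} (hq : q.IsHomogeneous 2) (u v : Fin n → R) (s t : R) :
    eval (fun j => s * u j + t * v j) q
      = s^2 * eval u q + s*t * epolar q u v + t^2 * eval v q := by
  have h := master hq u v 0 s t 0
  have he : (fun j => s * u j + t * v j + 0 * (0 : Fin n → R) j) = fun j => s * u j + t * v j := by
    funext j; ring
  rw [he] at h; rw [h]; ring

theorem eval_smul2 {q : MvPolynomial (Fin n) R} (hq : q.IsHomogeneous 2) (c : R) (y : Fin n → R) :
    eval (fun j => c * y j) q = c^2 * eval y q := by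
  have h := expand2 hq y 0 c 0
  have he : (fun j => c * y j + 0 * (0 : Fin n → R) j) = fun j => c * y j := by funext j; ring
  rw [he] at h; rw [h]; ring

theorem epolar_add_right {q : MvPolynomial (Fin n) R} (hq : q.IsHomogeneous 2)
    (u v w : Fin n → R) : epolar q u (v + w) = epolar q u v + epolar q u w := by
  have h := master hq u v w 1 1 1
  have he : (fun j => 1 * u j + 1 * v j + 1 * w j) = u + (v + w) := by
    funext j; simp; ring
  rw [he] at h
  have h2 := expand2 hq v w 1 1
  have he2 : (fun j => 1 * v j + 1 * w j) = v + w := by funext j; simp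
  rw [he2] at h2
  simp only [epolar] at h h2 ⊢
  linear_combination h - h2

theorem epolar_smul_right {q : MvPolynomial (Fin n) R} (hq : q.IsHomogeneous 2)
    (u v : Fin n → R) (c : R) : epolar q u (c • v) = c * epolar q u v := by
  have h := expand2 hq u v 1 c
  have he : (fun j => 1 * u j + c * v j) = u + c • v := by funext j; simp
  rw [he] at h
  have h2 := eval_smul2 hq c v
  have he2 : (fun j => c * v j) = c • v := by funext j; simp
  rw [he2] at h2
  simp only [epolar] at h ⊢
  linear_combination h - h2

theorem epolar_zero_right {q : MvPolynomial (Fin n) R} (hq : q.IsHomogeneous 2)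
    (u : Fin n → R) : epolar q u 0 = 0 := by
  have := epolar_smul_right hq u 0 0
  simpa using this

variable {S : Type} [CommRing S]

theorem eval_comp_map (f : R →+* S) (q : MvPolynomial (Fin n) R) (w : Fin n → R) :
    eval (fun j => f (w j)) (map f q) = f (eval w q) := by
  rw [eval_map, ← eval₂_id (g := w) q, eval₂_comp_left f (RingHom.id R) w q]
  rfl

theorem epolar_map (f : R →+* S) (q : MvPolynomial (Fin n) R) (u v : Fin n → R) :
    epolar (map f q) (fun j => f (u j)) (fun j => f (v j)) = f (epolar q u v) := by
  have he : ((fun j => f (u j)) + fun j => f (v j)) = fun j => f ((u + v) j) := by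
    funext j; simp
  simp only [epolar, he, eval_comp_map, map_sub]

end LPQ

namespace LPQ
open Module

theorem isHomog_map {R S : Type} [CommRing R] [CommRing S] {n m : ℕ} (f : R →+* S)
    {q : MvPolynomial (Fin n) R} (hq : q.IsHomogeneous m) : (map f q).IsHomogeneous m := by
  intro d hd
  rw [coeff_map] at hd
  exact hq (fun h => hd (by rw [h, map_zero]))

theorem epolar_comm {R : Type} [CommRing R] {n : ℕ} (q : MvPolynomial (Fin n) R)
    (u v : Fin n → R) : epolar q u v = epolar q v u := by
  simp only [epolar, add_comm u v]; ring

variable {k : Type} [Field k]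

theorem choose_ab (c₁ c₂ : k) : ∃ a b : k, ¬(a = 0 ∧ b = 0) ∧ a * c₁ + b * c₂ = 0 := by
  by_cases h : c₂ = 0
  · exact ⟨0, 1, by simp, by simp [h]⟩
  · exact ⟨1, -c₁ / c₂, by simp, by field_simp; ring⟩

theorem kpoint (q₁ q₂ : MvPolynomial (Fin 5) k) (h1 : q₁.IsHomogeneous 2)
    (h2 : q₂.IsHomogeneous 2) (y : Fin 5 → k) (hy : y ≠ 0)
    (e1 : eval y q₁ = 0) (e2 : eval y q₂ = 0) :
    ∃ (a b : k) (W : Submodule k (Fin 5 → k)), ¬(a = 0 ∧ b = 0) ∧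
      Module.finrank k W = 2 ∧ ∀ w ∈ W, eval w (a • q₁ + b • q₂) = 0 := by
  classical
  let f₁ : (Fin 5 → k) →ₗ[k] k :=
    { toFun := fun w => epolar q₁ y w
      map_add' := fun a b => epolar_add_right h1 y a b
      map_smul' := fun c a => by simpa [smul_eq_mul] using epolar_smul_right h1 y a c }
  let f₂ : (Fin 5 → k) →ₗ[k] k :=
    { toFun := fun w => epolar q₂ y w
      map_add' := fun a b => epolar_add_right h2 y a b
      map_smul' := fun c a => by simpa [smul_eq_mul] using epolar_smul_right h2 y a c }
  have h5 : finrank k (Fin 5 → k) = 5 := by simp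
  have hker : ∀ f : (Fin 5 → k) →ₗ[k] k, 4 ≤ finrank k (LinearMap.ker f) := by
    intro f
    have hr := LinearMap.finrank_range_add_finrank_ker f
    have hr1 : finrank k (LinearMap.range f) ≤ 1 := by
      simpa using Submodule.finrank_le (LinearMap.range f)
    omega
  have hsup := Submodule.finrank_sup_add_finrank_inf_eq (LinearMap.ker f₁) (LinearMap.ker f₂)
  have hsup5 : finrank k ↥(LinearMap.ker f₁ ⊔ LinearMap.ker f₂) ≤ 5 := by
    simpa [h5] using Submodule.finrank_le (LinearMap.ker f₁ ⊔ LinearMap.ker f₂)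
  have hT : 3 ≤ finrank k ↥(LinearMap.ker f₁ ⊓ LinearMap.ker f₂) := by
    have := hker f₁; have := hker f₂; omega
  have hex : ∃ v ∈ LinearMap.ker f₁ ⊓ LinearMap.ker f₂, v ∉ Submodule.span k {y} := by
    by_contra hcon
    push_neg at hcon
    have hle : LinearMap.ker f₁ ⊓ LinearMap.ker f₂ ≤ Submodule.span k {y} := hcon
    have := Submodule.finrank_mono hle
    rw [finrank_span_singleton hy] at this
    omega
  obtain ⟨v, hvT, hvs⟩ := hex
  have hv1 : epolar q₁ y v = 0 := hvT.1
  have hv2 : epolar q₂ y v = 0 := hvT.2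
  obtain ⟨a, b, hab, habv⟩ := choose_ab (eval v q₁) (eval v q₂)
  refine ⟨a, b, Submodule.span k {v, y}, hab, ?_, ?_⟩
  · have hli : LinearIndependent k ![v, y] := by
      rw [linearIndependent_fin2]
      refine ⟨by simpa using hy, fun c hc => hvs ?_⟩
      simp only [Matrix.cons_val_zero, Matrix.cons_val_one, Matrix.head_cons] at hc
      rw [← hc]
      exact Submodule.smul_mem _ c (Submodule.mem_span_singleton_self y)
    have := finrank_span_eq_card hli
    have hrange : Set.range ![v, y] = {v, y} := by
      simp [Matrix.range_cons, Matrix.range_empty, Set.pair_comm]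
    rw [hrange] at this
    simpa using this
  · intro w hw
    rw [Submodule.mem_span_pair] at hw
    obtain ⟨s, t, rfl⟩ := hw
    have he : (fun j => s * v j + t * y j) = s • v + t • y := by
      funext j; simp
    have hq1 := expand2 h1 v y s t
    have hq2 := expand2 h2 v y s t
    rw [he] at hq1 hq2
    rw [map_add, smul_eval, smul_eval, hq1, hq2, epolar_comm q₁ v y, epolar_comm q₂ v y,
      e1, e2, hv1, hv2]
    linear_combination s^2 * habv

end LPQ

namespace LPQ
open Module
variable {k : Type} [Field k]

theorem eval_zero_homog {R : Type} [CommRing R] {n : ℕ} {q : MvPolynomial (Fin n) R}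
    (hq : q.IsHomogeneous 2) : eval (0 : Fin n → R) q = 0 := by
  have h := eval_smul2 hq 0 0
  have he : (fun j => (0:R) * (0 : Fin n → R) j) = (0 : Fin n → R) := by funext j; simp
  rw [he] at h
  simpa using h

theorem case2 (hchar : ringChar k ≠ 2) (q₁ q₂ : MvPolynomial (Fin 5) k)
    (h1 : q₁.IsHomogeneous 2) (h2 : q₂.IsHomogeneous 2)
    (K : Type) [Field K] [Algebra k K] [FiniteDimensional k K]
    (hrank : finrank k K = 2) (x : Fin 5 → K) (hx : x ≠ 0)
    (hx1 : eval x (map (algebraMap k K) q₁) = 0)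
    (hx2 : eval x (map (algebraMap k K) q₂) = 0) :
    ∃ (a b : k) (W : Submodule k (Fin 5 → k)), ¬(a = 0 ∧ b = 0) ∧
      Module.finrank k W = 2 ∧ ∀ w ∈ W, eval w (a • q₁ + b • q₂) = 0 := by
  classical
  have h2k : (2 : k) ≠ 0 := Ring.two_ne_zero hchar
  have hinj : Function.Injective (algebraMap k K) := (algebraMap k K).injective
  -- there is an element outside the image of k
  have hexβ : ∃ β₀ : K, β₀ ∉ Set.range (algebraMap k K) := by
    by_contra hcon
    push_neg at hcon
    have hsp : Submodule.span k ({1} : Set K) = ⊤ := by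
      rw [Submodule.eq_top_iff']
      intro z
      obtain ⟨c, hc⟩ := hcon z
      rw [Submodule.mem_span_singleton]
      exact ⟨c, by rw [← hc, Algebra.smul_def, mul_one]⟩
    have h1' := finrank_span_singleton (K := k) (one_ne_zero : (1:K) ≠ 0)
    rw [hsp, finrank_top] at h1'
    omega
  obtain ⟨β₀, hβ₀⟩ := hexβ
  -- independence of 1 and any element outside the image
  have hindep : ∀ β : K, β ∉ Set.range (algebraMap k K) → ∀ c d : k,
      algebraMap k K c + algebraMap k K d * β = 0 → c = 0 ∧ d = 0 := by
    intro β hβ c d h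
    by_cases hd : d = 0
    · subst hd
      simp only [map_zero, zero_mul, add_zero] at h
      exact ⟨hinj (by rw [h, map_zero]), rfl⟩
    · exfalso
      apply hβ
      have hd' : algebraMap k K d ≠ 0 := fun h0 => hd (hinj (by rw [h0, map_zero]))
      refine ⟨-c/d, ?_⟩
      rw [map_div₀, map_neg]
      field_simp
      linear_combination -h
  -- every element is c + d β for β outside the image
  have hspan2 : ∀ β : K, β ∉ Set.range (algebraMap k K) → ∀ z : K,
      ∃ c d : k, z = algebraMap k K c + algebraMap k K d * β := by
    intro β hβ z
    have hli : LinearIndependent k ![β, (1:K)] := by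
      rw [linearIndependent_fin2]
      refine ⟨by simp, fun c hc => hβ ?_⟩
      simp only [Matrix.cons_val_zero, Matrix.cons_val_one, Matrix.head_cons] at hc
      exact ⟨c, by rw [← hc, Algebra.algebraMap_eq_smul_one]⟩
    have hsp : Submodule.span k (Set.range ![β, (1:K)]) = ⊤ := by
      apply Submodule.eq_top_of_finrank_eq
      rw [finrank_span_eq_card hli, hrank]
      simp
    have hz : z ∈ Submodule.span k ({β, (1:K)} : Set K) := by
      have hrange : Set.range ![β, (1:K)] = {β, (1:K)} := by
        simp [Matrix.range_cons, Matrix.range_empty, Set.pair_comm]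
      rw [← hrange, hsp]
      trivial
    rw [Submodule.mem_span_pair] at hz
    obtain ⟨s, t, hst⟩ := hz
    exact ⟨t, s, by rw [← hst, Algebra.smul_def, Algebra.smul_def, mul_one]; ring⟩
  -- complete the square
  obtain ⟨e, f, hef⟩ := hspan2 β₀ hβ₀ (β₀ * β₀)
  set β : K := β₀ - algebraMap k K (f/2) with hβdef
  have hβ : β ∉ Set.range (algebraMap k K) := by
    rintro ⟨c, hc⟩
    exact hβ₀ ⟨c + f/2, by rw [map_add, hc, hβdef]; ring⟩
  set dd : k := e + (f/2)*(f/2) with hdd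
  have hβ2 : β * β = algebraMap k K dd := by
    have h2K : algebraMap k K (f/2) + algebraMap k K (f/2) = algebraMap k K f := by
      rw [← map_add]
      congr 1
      field_simp
      ring
    calc β * β = β₀ * β₀ - (algebraMap k K (f/2) + algebraMap k K (f/2)) * β₀
          + algebraMap k K (f/2) * algebraMap k K (f/2) := by rw [hβdef]; ring
    _ = algebraMap k K e + algebraMap k K ((f/2)*(f/2)) := by
        rw [hef, h2K, ← map_mul]; ring
    _ = algebraMap k K dd := by rw [← map_add]
  -- coordinates
  have hcoord := fun j => hspan2 β hβ (x j)
  choose u v hx' using hcoord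
  -- extract the coefficient equations
  have key : ∀ q : MvPolynomial (Fin 5) k, q.IsHomogeneous 2 →
      eval x (map (algebraMap k K) q) = 0 →
      eval u q + dd * eval v q = 0 ∧ epolar q u v = 0 := by
    intro q hq h0
    have hxeq : x = fun j => (1:K) * (algebraMap k K (u j)) + β * (algebraMap k K (v j)) := by
      funext j; rw [hx' j]; ring
    rw [hxeq, expand2 (isHomog_map (algebraMap k K) hq) (fun j => algebraMap k K (u j))
      (fun j => algebraMap k K (v j)) 1 β, eval_comp_map, eval_comp_map, epolar_map] at h0
    have hc : algebraMap k K (eval u q + dd * eval v q)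
        + algebraMap k K (epolar q u v) * β = 0 := by
      rw [map_add, map_mul]
      linear_combination h0 - algebraMap k K (eval v q) * hβ2
    exact hindep β hβ _ _ hc
  obtain ⟨hE1, hB1⟩ := key q₁ h1 hx1
  obtain ⟨hE2, hB2⟩ := key q₂ h2 hx2
  by_cases hli : LinearIndependent k ![u, v]
  · -- u, v independent : they span the line's plane
    obtain ⟨a, b, hab, habv⟩ := choose_ab (eval v q₁) (eval v q₂)
    refine ⟨a, b, Submodule.span k {u, v}, hab, ?_, ?_⟩
    · have := finrank_span_eq_card hli
      have hrange : Set.range ![u, v] = {u, v} := by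
        simp [Matrix.range_cons, Matrix.range_empty, Set.pair_comm]
      rw [hrange] at this
      simpa using this
    · intro w hw
      rw [Submodule.mem_span_pair] at hw
      obtain ⟨s, t, rfl⟩ := hw
      have he : (fun j => s * u j + t * v j) = s • u + t • v := by funext j; simp
      have hq1 := expand2 h1 u v s t
      have hq2 := expand2 h2 u v s t
      rw [he] at hq1 hq2
      rw [map_add, smul_eval, smul_eval, hq1, hq2, hB1, hB2]
      linear_combination a*s^2*hE1 + b*s^2*hE2 + (t^2 - dd*s^2)*habv
  · -- u, v dependent : we get a k-point
    rw [linearIndependent_fin2] at hli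
    push_neg at hli
    simp only [Matrix.cons_val_zero, Matrix.cons_val_one, Matrix.head_cons] at hli
    by_cases hv : v = 0
    · -- x is (the image of) a k-point u
      have hu : u ≠ 0 := by
        intro hu0
        apply hx
        funext j
        rw [hx' j, hu0, hv]
        simp
      have hev : ∀ q : MvPolynomial (Fin 5) k, q.IsHomogeneous 2 →
          eval u q + dd * eval v q = 0 → eval u q = 0 := by
        intro q hq hE
        rw [hv, eval_zero_homog hq, mul_zero, add_zero] at hE
        exact hE
      exact kpoint q₁ q₂ h1 h2 u hu (hev q₁ h1 hE1) (hev q₂ h2 hE2)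
    · obtain ⟨c, hc⟩ := hli hv
      -- u = c • v, so v is a k-point
      have hgne : algebraMap k K c + β ≠ 0 := by
        intro h0
        exact hβ ⟨-c, by rw [map_neg]; linear_combination -h0⟩
      have hvne : v ≠ 0 := hv
      have hxv : x = fun j => (algebraMap k K c + β) * algebraMap k K (v j) := by
        funext j
        rw [hx' j, ← hc]
        simp only [Pi.smul_apply, smul_eq_mul, map_mul]
        ring
      have hev : ∀ q : MvPolynomial (Fin 5) k, q.IsHomogeneous 2 →
          eval x (map (algebraMap k K) q) = 0 → eval v q = 0 := by
        intro q hq h0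
        rw [hxv, eval_smul2 (isHomog_map (algebraMap k K) hq) (algebraMap k K c + β)
          (fun j => algebraMap k K (v j)), eval_comp_map] at h0
        rcases mul_eq_zero.mp h0 with h' | h'
        · exact absurd (pow_eq_zero_iff (n := 2) (by norm_num) |>.mp h') hgne
        · exact hinj (by rw [h', map_zero])
      exact kpoint q₁ q₂ h1 h2 v hvne (hev q₁ h1 hx1) (hev q₂ h2 hx2)

end LPQ

namespace LPQ
open Module IntermediateField
variable {k : Type} [Field k]

theorem forward_aux (q₁ q₂ : MvPolynomial (Fin 5) k)
    (h1 : q₁.IsHomogeneous 2) (h2 : q₂.IsHomogeneous 2) (a b : k) (ha : a ≠ 0)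
    (W : Submodule k (Fin 5 → k)) (hW : finrank k W = 2)
    (hvan : ∀ w ∈ W, a * eval w q₁ + b * eval w q₂ = 0) :
    ∃ K : IntermediateField k (AlgebraicClosure k),
      FiniteDimensional k K ∧ finrank k K ≤ 2 ∧ HasPointIn q₁ q₂ K := by
  classical
  -- two independent vectors in W
  have hWbot : W ≠ ⊥ := by
    intro h
    rw [h] at hW
    simp at hW
  obtain ⟨w₂, hw₂W, hw₂⟩ := W.ne_bot_iff.mp hWbot
  have hex : ∃ w₁ ∈ W, w₁ ∉ Submodule.span k {w₂} := by
    by_contra hcon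
    push_neg at hcon
    have hle : W ≤ Submodule.span k {w₂} := hcon
    have := Submodule.finrank_mono hle
    rw [finrank_span_singleton hw₂] at this
    omega
  obtain ⟨w₁, hw₁W, hw₁s⟩ := hex
  by_cases hγ : eval w₂ q₂ = 0
  · -- w₂ is already a k-point
    refine ⟨⊥, inferInstance, (le_of_eq IntermediateField.finrank_bot).trans one_le_two, fun j => algebraMap k _ (w₂ j), ?_, ?_, ?_⟩
    · intro h0
      apply hw₂
      funext j
      exact (algebraMap k (⊥ : IntermediateField k (AlgebraicClosure k))).injective (by simpa using congrFun h0 j)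
    · rw [eval_comp_map]
      have h := hvan w₂ hw₂W
      rw [hγ, mul_zero, add_zero] at h
      rw [mul_eq_zero] at h
      rcases h with h | h
      · exact absurd h ha
      · rw [h, map_zero]
    · rw [eval_comp_map, hγ, map_zero]
  · -- solve the quadratic  γ T² + B T + α = 0  over a quadratic extension
    set γ : k := eval w₂ q₂ with hγdef
    set B : k := epolar q₂ w₁ w₂ with hBdef
    set α : k := eval w₁ q₂ with hαdef
    set P : Polynomial k := Polynomial.C γ * Polynomial.X^2 + Polynomial.C B * Polynomial.X
      + Polynomial.C α with hPdef
    have hPdeg : P.natDegree = 2 := Polynomial.natDegree_quadratic hγ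
    have hPne : P ≠ 0 := fun h => by simp [h] at hPdeg
    have hdeg' : (P.map (algebraMap k (AlgebraicClosure k))).degree ≠ 0 := by
      rw [Polynomial.degree_map]
      rw [Polynomial.degree_eq_natDegree hPne, hPdeg]
      norm_num
    obtain ⟨ρ, hρ⟩ := IsAlgClosed.exists_root _ hdeg'
    have haρ : Polynomial.aeval ρ P = 0 := by
      rwa [Polynomial.aeval_def, ← Polynomial.eval_map]
    have hint : IsIntegral k ρ := Algebra.IsIntegral.isIntegral ρ
    have hfd : FiniteDimensional k k⟮ρ⟯ := adjoin.finiteDimensional hint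
    refine ⟨k⟮ρ⟯, hfd, ?_, ?_⟩
    · rw [adjoin.finrank hint]
      exact (Polynomial.natDegree_le_of_dvd (minpoly.dvd k ρ haρ) hPne).trans (le_of_eq hPdeg)
    · -- the point
      set K := k⟮ρ⟯
      set g : K := AdjoinSimple.gen k ρ with hgdef
      have hginj : Function.Injective (algebraMap K (AlgebraicClosure k)) :=
        (algebraMap K (AlgebraicClosure k)).injective
      have hgeq : algebraMap k K α + algebraMap k K B * g + algebraMap k K γ * (g * g) = 0 := by
        apply hginj
        simp only [map_zero, map_add, map_mul]
        rw [← IsScalarTower.algebraMap_apply k K, ← IsScalarTower.algebraMap_apply k K,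
          ← IsScalarTower.algebraMap_apply k K]
        rw [show algebraMap K (AlgebraicClosure k) g = ρ from AdjoinSimple.algebraMap_gen k ρ]
        have := haρ
        rw [hPdef] at this
        simp only [map_add, map_mul, Polynomial.aeval_C, Polynomial.aeval_X_pow,
          Polynomial.aeval_X] at this
        linear_combination this
      refine ⟨fun j => algebraMap k K (w₁ j) + g * algebraMap k K (w₂ j), ?_, ?_, ?_⟩
      · -- nonvanishing
        intro h0
        have h0' : ∀ j, algebraMap k K (w₁ j) + g * algebraMap k K (w₂ j) = 0 :=
          fun j => congrFun h0 j
        by_cases hg : ∃ c : k, g = algebraMap k K c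
        · obtain ⟨c, hc⟩ := hg
          have : ∀ j, w₁ j + c * w₂ j = 0 := by
            intro j
            apply (algebraMap k K).injective
            rw [map_add, map_mul, map_zero, ← hc]
            exact h0' j
          apply hw₁s
          have hw1 : w₁ = (-c) • w₂ := by
            funext j
            have := this j
            simp only [Pi.smul_apply, smul_eq_mul]
            linear_combination this
          rw [hw1]
          exact Submodule.smul_mem _ _ (Submodule.mem_span_singleton_self w₂)
        · push_neg at hg
          obtain ⟨j, hj⟩ : ∃ j, w₂ j ≠ 0 := by
            by_contra hall
            push_neg at hall
            exact hw₂ (funext hall)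
          have hwj : algebraMap k K (w₂ j) ≠ 0 :=
            fun h => hj ((algebraMap k K).injective (by rw [h, map_zero]))
          apply hg (-(w₁ j) / (w₂ j))
          rw [map_div₀, map_neg, eq_div_iff hwj]
          linear_combination h0' j
      · -- q₁ vanishes
        have hrel : ∀ w ∈ W, a * eval w q₁ + b * eval w q₂ = 0 := hvan
        have hr1 := hrel w₁ hw₁W
        have hr2 := hrel w₂ hw₂W
        have hr3 := hrel (w₁ + w₂) (W.add_mem hw₁W hw₂W)
        have hxeq : (fun j => algebraMap k K (w₁ j) + g * algebraMap k K (w₂ j))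
            = fun j => (1:K) * (algebraMap k K (w₁ j)) + g * (algebraMap k K (w₂ j)) := by
          funext j; ring
        have hexp : ∀ q : MvPolynomial (Fin 5) k, q.IsHomogeneous 2 →
            eval (fun j => algebraMap k K (w₁ j) + g * algebraMap k K (w₂ j))
              (map (algebraMap k K) q)
            = algebraMap k K (eval w₁ q) + g * algebraMap k K (epolar q w₁ w₂)
              + g * g * algebraMap k K (eval w₂ q) := by
          intro q hq
          rw [hxeq, expand2 (isHomog_map (algebraMap k K) hq) (fun j => algebraMap k K (w₁ j))
            (fun j => algebraMap k K (w₂ j)) 1 g, eval_comp_map, eval_comp_map, epolar_map]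
          ring
        have hQ2 : eval (fun j => algebraMap k K (w₁ j) + g * algebraMap k K (w₂ j))
            (map (algebraMap k K) q₂) = 0 := by
          rw [hexp q₂ h2]
          linear_combination hgeq
        have hQ1 : algebraMap k K a * eval (fun j => algebraMap k K (w₁ j)
            + g * algebraMap k K (w₂ j)) (map (algebraMap k K) q₁) = 0 := by
          rw [hexp q₁ h1]
          have hB' : a * epolar q₁ w₁ w₂ + b * epolar q₂ w₁ w₂ = 0 := by
            simp only [epolar]
            linear_combination hr3 - hr1 - hr2
          have m1 : algebraMap k K (a * eval w₁ q₁ + b * eval w₁ q₂) = 0 := by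
            rw [hr1, map_zero]
          have m2 : algebraMap k K (a * eval w₂ q₁ + b * eval w₂ q₂) = 0 := by
            rw [hr2, map_zero]
          have m3 : algebraMap k K (a * epolar q₁ w₁ w₂ + b * epolar q₂ w₁ w₂) = 0 := by
            rw [hB', map_zero]
          simp only [map_add, map_mul] at m1 m2 m3
          have hQ2' := hQ2
          rw [hexp q₂ h2] at hQ2'
          linear_combination m1 + g * m3 + g*g*m2 - algebraMap k K b * hQ2'
        have : eval (fun j => algebraMap k K (w₁ j) + g * algebraMap k K (w₂ j))
            (map (algebraMap k K) q₁) = 0 := by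
          rcases mul_eq_zero.mp hQ1 with h | h
          · exact absurd ((algebraMap k K).injective (by rw [h, map_zero])) ha
          · exact h
        exact this
      · have hxeq : (fun j => algebraMap k K (w₁ j) + g * algebraMap k K (w₂ j))
            = fun j => (1:K) * (algebraMap k K (w₁ j)) + g * (algebraMap k K (w₂ j)) := by
          funext j; ring
        rw [hxeq, expand2 (isHomog_map (algebraMap k K) h2) (fun j => algebraMap k K (w₁ j))
          (fun j => algebraMap k K (w₂ j)) 1 g, eval_comp_map, eval_comp_map, epolar_map]
        linear_combination hgeq

end LPQ

namespace LPQ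
theorem push_point {k K L : Type} [Field k] [Field K] [Field L] [Algebra k K] [Algebra k L]
    [Algebra K L] [IsScalarTower k K L] {n : ℕ} (q : MvPolynomial (Fin n) k) (x : Fin n → K) :
    eval (fun j => algebraMap K L (x j)) (map (algebraMap k L) q)
      = algebraMap K L (eval x (map (algebraMap k K) q)) := by
  have h := eval_comp_map (algebraMap K L) (map (algebraMap k K) q) x
  rw [map_map, ← IsScalarTower.algebraMap_eq] at h
  exact h
end LPQ

/-- For a smooth complete intersection of two quadrics `X ⊂ ℙ⁴` over a field of
characteristic different from `2`, the following are equivalent: (i) some quadric in the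
pencil spanned by `q₁, q₂` contains a line defined over `k`; (ii) `X` has a point over some
extension of `k` of degree at most `2`. -/
theorem line_on_pencil_iff_quadratic_point
    (k : Type) [Field k] (hchar : ringChar k ≠ 2)
    (q₁ q₂ : MvPolynomial (Fin 5) k)
    (h1 : q₁.IsHomogeneous 2) (h2 : q₂.IsHomogeneous 2)
    (hs : DefinesSmoothCI q₁ q₂) :
    (∃ (a b : k) (W : Submodule k (Fin 5 → k)), ¬(a = 0 ∧ b = 0) ∧
      Module.finrank k W = 2 ∧ ∀ w ∈ W, eval w (a • q₁ + b • q₂) = 0) ↔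
    (∃ K : IntermediateField k (AlgebraicClosure k),
      FiniteDimensional k K ∧ Module.finrank k K ≤ 2 ∧ HasPointIn q₁ q₂ K) := by
  constructor
  · rintro ⟨a, b, W, hab, hW2, hvan⟩
    have hvan' : ∀ w ∈ W, a * eval w q₁ + b * eval w q₂ = 0 := by
      intro w hw
      have := hvan w hw
      rwa [map_add, smul_eval, smul_eval] at this
    by_cases ha : a = 0
    · have hb : b ≠ 0 := fun hb => hab ⟨ha, hb⟩
      obtain ⟨K, hfd, hrk, x, hx, hA, hB⟩ := LPQ.forward_aux q₂ q₁ h2 h1 b a hb W hW2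
        (fun w hw => by linear_combination hvan' w hw)
      exact ⟨K, hfd, hrk, x, hx, hB, hA⟩
    · exact LPQ.forward_aux q₁ q₂ h1 h2 a b ha W hW2 hvan'
  · rintro ⟨K, hfd, hrk, hpt⟩
    obtain ⟨x, hx, hx1, hx2⟩ := hpt
    have h1rk : 0 < Module.finrank k K := Module.finrank_pos
    have hcase : Module.finrank k K = 1 ∨ Module.finrank k K = 2 := by omega
    rcases hcase with h | h
    · have hKbot : K = ⊥ := IntermediateField.finrank_eq_one_iff.mp h
      subst hKbot
      choose y hy using fun j => IntermediateField.mem_bot.mp (x j).2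
      have hyne : y ≠ 0 := by
        intro h0
        apply hx
        funext j
        have hxj : (x j : AlgebraicClosure k) = 0 := by
          rw [← hy j, h0]
          simp
        exact Subtype.ext hxj
      have hev : ∀ q : MvPolynomial (Fin 5) k,
          eval x (map (algebraMap k ↥(⊥ : IntermediateField k (AlgebraicClosure k))) q) = 0 →
          eval y q = 0 := by
        intro q h0
        apply (algebraMap k (AlgebraicClosure k)).injective
        rw [map_zero, ← LPQ.eval_comp_map (algebraMap k (AlgebraicClosure k)) q y]
        have hfun : (fun j => algebraMap k (AlgebraicClosure k) (y j))
            = fun j => algebraMap ↥(⊥ : IntermediateField k (AlgebraicClosure k))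
                (AlgebraicClosure k) (x j) := by
          funext j
          rw [hy j]
          rfl
        rw [hfun, LPQ.push_point, h0, map_zero]
      exact LPQ.kpoint q₁ q₂ h1 h2 y hyne (hev q₁ hx1) (hev q₂ hx2)
    · exact LPQ.case2 hchar q₁ q₂ h1 h2 (↥K) h x hx hx1 hx2
end
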